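/- If the logging policy π₀ has deficient support, i.e., the set 𝒰(x) = {a ∈ 𝒜 : π₀(a|x) = 0} may be nonempty, then the importance-weighted reward estimator (with convention 0/0 · r = 0) has bias E_x[ −∑_{a ∈ 𝒰(x)} π(a|x) r(x,a) ]; that is, E_x E_{a∼π₀(·|x)}[ (π(a|x)/π₀(a|x)) r(x,a) ] − E_x E_{a∼π(·|x)}[ r(x,a) ] = E_x[ −∑_{a∈𝒰(x)} π(a|x) r(x,a) ]. -/

import Mathlib

open scoped Classical in
/-- Bias of the IPS estimator under deficient support (Prop. 1): with the
convention that terms with `π₀ x a = 0` contribute `0`, the difference between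
the importance-weighted value and the true value equals
`E_x[ -∑_{a ∈ U(x)} π(a|x) r(x,a) ]`. -/
theorem ips_bias_deficient_support
    {X A : Type*} [Fintype X] [Fintype A]
    (P : X → ℝ) (π₀ π : X → A → ℝ) (r : X → A → ℝ)
    (hPnonneg : ∀ x, 0 ≤ P x) (hPsum : ∑ x, P x = 1)
    (hπ₀nonneg : ∀ x a, 0 ≤ π₀ x a) (hπ₀sum : ∀ x, ∑ a, π₀ x a = 1)
    (hπnonneg : ∀ x a, 0 ≤ π x a) (hπsum : ∀ x, ∑ a, π x a = 1) :
    (∑ x, P x * ∑ a, π₀ x a *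
        (if π₀ x a = 0 then 0 else π x a / π₀ x a * r x a))
      - ∑ x, P x * ∑ a, π x a * r x a
    = ∑ x, P x *
        (-(∑ a ∈ Finset.univ.filter (fun a => π₀ x a = 0), π x a * r x a)) := by
  rw [← Finset.sum_sub_distrib]
  apply Finset.sum_congr rfl
  intro x _
  rw [← mul_sub, ← Finset.sum_sub_distrib]
  congr 1
  have : ∀ a : A, π₀ x a * (if π₀ x a = 0 then 0 else π x a / π₀ x a * r x a)
      - π x a * r x a = if π₀ x a = 0 then -(π x a * r x a) else 0 := by
    intro a
    by_cases h : π₀ x a = 0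
    · simp [h]
    · rw [if_neg h, if_neg h, div_mul_eq_mul_div, mul_div_cancel₀ _ h, sub_self]
  simp only [this]
  rw [Finset.sum_ite, Finset.sum_const_zero, add_zero, ← Finset.sum_neg_distrib]
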